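/- Consider a customer attraction game in which every agent has weight 1, every node has value 1, and every strategy in every strategy space is a nonempty subset of N. Let m = |A|, n = |N|, H_m = ∑_{k=1}^{m} 1/k, and fix 0 < ε < 1. Suppose S^0, S^1, …, S^T is a sequence of strategy profiles such that for each t < T there is an agent i_t and a strategy S' ∈ 𝒮_{i_t} with S^{t+1} = (S', S^t_{-i_t}) and U_{i_t}(S^{t+1}) > (1+ε) · U_{i_t}(S^t). Then T < ε^{-1} · n · m · H_m. In particular, best-response dynamics reaches a profile in which no agent can improve her utility by a factor exceeding 1+ε within ε^{-1} n m H_m steps. -/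

import Mathlib

open Finset

/-- A customer attraction game: nodes `N` with integer values `≥ 1`, agents `A`
with integer weights `≥ 1`, and a nonempty finite strategy space (a finite set of
subsets of `N`) for each agent. -/
structure CAG (N A : Type*) [Fintype N] [Fintype A] where
  v : N → ℕ
  v_pos : ∀ j, 1 ≤ v j
  w : A → ℕ
  w_pos : ∀ i, 1 ≤ w i
  strat : A → Finset (Finset N)
  strat_ne : ∀ i, (strat i).Nonempty

variable {N A : Type*} [Fintype N] [Fintype A] [DecidableEq N]

/-- The load `c(j,S)` of node `j`: total weight of agents attracting `j`. -/
def CAG.load (G : CAG N A) (S : A → Finset N) (j : N) : ℕ :=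
  ∑ i : A, if j ∈ S i then G.w i else 0

/-- The utility `U_i(S) = ∑_{j ∈ S_i} v_j · w_i / c(j,S)`. -/
noncomputable def CAG.util (G : CAG N A) (S : A → Finset N) (i : A) : ℝ :=
  ∑ j ∈ S i, (G.v j : ℝ) * (G.w i : ℝ) / (G.load S j : ℝ)

/-- A strategy profile: each agent plays a strategy from her strategy space. -/
def CAG.valid (G : CAG N A) (S : A → Finset N) : Prop :=
  ∀ i, S i ∈ G.strat i

/-- Pure Nash equilibrium. -/
def CAG.PNE [DecidableEq A] (G : CAG N A) (S : A → Finset N) : Prop :=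
  G.valid S ∧ ∀ i, ∀ S' ∈ G.strat i, G.util (Function.update S i S') i ≤ G.util S i

/-- Social welfare. -/
noncomputable def CAG.sw (G : CAG N A) (S : A → Finset N) : ℝ :=
  ∑ i : A, G.util S i

/-- The harmonic number `H_c = ∑_{k=1}^{c} 1/k`. -/
noncomputable def harm (c : ℕ) : ℝ := ∑ k ∈ Finset.range c, (1 : ℝ) / (k + 1)

/-- Rosenthal-type potential `Φ(S) = ∑_j v_j ∑_{k=1}^{c(j,S)} 1/k`. -/
noncomputable def CAG.pot (G : CAG N A) (S : A → Finset N) : ℝ :=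
  ∑ j : N, (G.v j : ℝ) * harm (G.load S j)

lemma harm_nonneg (c : ℕ) : 0 ≤ harm c := by
  unfold harm
  exact Finset.sum_nonneg fun k _ => by positivity

lemma harm_mono {c d : ℕ} (h : c ≤ d) : harm c ≤ harm d := by
  unfold harm
  exact Finset.sum_le_sum_of_subset_of_nonneg (Finset.range_subset_range.2 h)
    (fun k _ _ => by positivity)

lemma harm_succ (c : ℕ) : harm (c + 1) = harm c + 1 / ((c : ℝ) + 1) := by
  unfold harm
  rw [Finset.sum_range_succ]

lemma harm_one : harm 1 = 1 := by simp [harm]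

lemma load_update [DecidableEq A] (G : CAG N A) (S : A → Finset N) (i : A)
    (t : Finset N) (j : N) :
    G.load (Function.update S i t) j =
      (∑ i' ∈ Finset.univ.erase i, if j ∈ S i' then G.w i' else 0) +
        (if j ∈ t then G.w i else 0) := by
  unfold CAG.load
  rw [← Finset.sum_erase_add _ _ (Finset.mem_univ i), Function.update_self]
  congr 1
  refine Finset.sum_congr rfl fun i' hi' => ?_
  rw [Function.update_of_ne (Finset.ne_of_mem_erase hi')]

lemma pot_diff [DecidableEq A] (G : CAG N A) (hw : ∀ i, G.w i = 1)
    (hv : ∀ j, G.v j = 1) (S : A → Finset N) (i : A) (s : Finset N) :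
    G.pot (Function.update S i s) - G.pot S =
      G.util (Function.update S i s) i - G.util S i := by
  set L : N → ℕ := fun j => ∑ i' ∈ Finset.univ.erase i, if j ∈ S i' then G.w i' else 0 with hL
  have hload' : ∀ j, G.load (Function.update S i s) j = L j + (if j ∈ s then 1 else 0) := by
    intro j; rw [load_update]; simp [hw, hL]
  have hloadS : ∀ j, G.load S j = L j + (if j ∈ S i then 1 else 0) := by
    intro j
    conv_lhs => rw [← Function.update_eq_self i S]
    rw [load_update]; simp [hw, hL]
  have hU' : G.util (Function.update S i s) i = ∑ j ∈ s, 1 / ((L j : ℝ) + 1) := by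
    unfold CAG.util
    rw [Function.update_self]
    refine Finset.sum_congr rfl fun j hj => ?_
    rw [hload' j, if_pos hj, hv, hw]
    push_cast
    ring
  have hU : G.util S i = ∑ j ∈ S i, 1 / ((L j : ℝ) + 1) := by
    unfold CAG.util
    refine Finset.sum_congr rfl fun j hj => ?_
    rw [hloadS j, if_pos hj, hv, hw]
    push_cast
    ring
  have hpot : ∀ X : A → Finset N, G.pot X = ∑ j : N, harm (G.load X j) := by
    intro X; unfold CAG.pot
    exact Finset.sum_congr rfl fun j _ => by rw [hv]; push_cast; ring
  rw [hU', hU, hpot, hpot, ← Finset.sum_sub_distrib]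
  have key : ∀ j : N, harm (G.load (Function.update S i s) j) - harm (G.load S j) =
      (if j ∈ s then 1 / ((L j : ℝ) + 1) else 0) -
        (if j ∈ S i then 1 / ((L j : ℝ) + 1) else 0) := by
    intro j
    rw [hload' j, hloadS j]
    by_cases h1 : j ∈ s <;> by_cases h2 : j ∈ S i <;>
      simp [h1, h2, harm_succ]
  rw [Finset.sum_congr rfl fun j _ => key j, Finset.sum_sub_distrib]
  congr 1 <;> rw [Finset.sum_ite_mem] <;> simp

/-- Best-response-dynamics bound.  In a symmetric-weight, unit-value game
whose strategies are all nonempty, any sequence of `(1+ε)`-improving unilateral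
deviations has length less than `ε⁻¹ · n · m · H_m`. -/
theorem best_response_dynamics_length_bound [DecidableEq A] [Nonempty N] [Nonempty A]
    (G : CAG N A) (hw : ∀ i, G.w i = 1) (hv : ∀ j, G.v j = 1)
    (hne : ∀ i, ∀ s ∈ G.strat i, s.Nonempty)
    (ε : ℝ) (hε0 : 0 < ε) (hε1 : ε < 1)
    (S : ℕ → A → Finset N) (T : ℕ)
    (h0 : G.valid (S 0))
    (hstep : ∀ t < T, ∃ i : A, ∃ s ∈ G.strat i,
      S (t + 1) = Function.update (S t) i s ∧
      (1 + ε) * G.util (S t) i < G.util (S (t + 1)) i) :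
    (T : ℝ) < ε⁻¹ * (Fintype.card N : ℝ) * (Fintype.card A : ℝ) * harm (Fintype.card A) := by
  set m := Fintype.card A with hmdef
  set n := Fintype.card N with hndef
  have hm : 1 ≤ m := Fintype.card_pos
  have hn : 1 ≤ n := Fintype.card_pos
  have hmpos : (0 : ℝ) < m := by exact_mod_cast hm
  have hloadle : ∀ Sp : A → Finset N, ∀ j, G.load Sp j ≤ m := by
    intro Sp j
    unfold CAG.load
    calc ∑ i : A, (if j ∈ Sp i then G.w i else 0) ≤ ∑ _i : A, 1 :=
          Finset.sum_le_sum fun i _ => by split <;> simp [hw]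
      _ = m := by simp [hmdef]
  have hload_lb : ∀ (Sp : A → Finset N) (i : A) (j : N), j ∈ Sp i → 1 ≤ G.load Sp j := by
    intro Sp i j hj
    unfold CAG.load
    calc 1 = (if j ∈ Sp i then G.w i else 0) := by rw [if_pos hj, hw]
      _ ≤ ∑ i' : A, (if j ∈ Sp i' then G.w i' else 0) :=
          Finset.single_le_sum (f := fun i' => if j ∈ Sp i' then G.w i' else 0)
            (fun i' _ => by positivity) (Finset.mem_univ i)
  have hpot_le : ∀ Sp : A → Finset N, G.pot Sp ≤ n * harm m := by
    intro Sp
    unfold CAG.pot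
    calc ∑ j : N, (G.v j : ℝ) * harm (G.load Sp j) ≤ ∑ _j : N, harm m :=
          Finset.sum_le_sum fun j _ => by
            rw [hv]; push_cast; rw [one_mul]; exact harm_mono (hloadle Sp j)
      _ = n * harm m := by simp [hndef, Finset.card_univ]
  have hutil_lb : ∀ Sp : A → Finset N, G.valid Sp → ∀ i, 1 / (m : ℝ) ≤ G.util Sp i := by
    intro Sp hval i
    obtain ⟨j0, hj0⟩ := hne i _ (hval i)
    have hterm : ∀ j ∈ Sp i, 1 / (m : ℝ) ≤ (G.v j : ℝ) * (G.w i : ℝ) / (G.load Sp j : ℝ) := by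
      intro j hj
      rw [hv, hw]
      push_cast
      have h1 : (0 : ℝ) < (G.load Sp j : ℝ) := by
        exact_mod_cast Nat.lt_of_lt_of_le Nat.zero_lt_one (hload_lb Sp i j hj)
      have h2 : (G.load Sp j : ℝ) ≤ (m : ℝ) := by exact_mod_cast hloadle Sp j
      rw [one_mul]
      exact one_div_le_one_div_of_le h1 h2
    calc 1 / (m : ℝ) ≤ (G.v j0 : ℝ) * (G.w i : ℝ) / (G.load Sp j0 : ℝ) := hterm j0 hj0
      _ ≤ G.util Sp i := by
          unfold CAG.util
          refine Finset.single_le_sum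
            (f := fun j => (G.v j : ℝ) * (G.w i : ℝ) / (G.load Sp j : ℝ)) (fun j hj => ?_) hj0
          have := hterm j hj
          have h0 : (0 : ℝ) < 1 / (m : ℝ) := by positivity
          linarith
  have hvalid : ∀ t, t ≤ T → G.valid (S t) := by
    intro t
    induction t with
    | zero => intro _; exact h0
    | succ t ih =>
      intro ht
      obtain ⟨i, s, hs, heq, _⟩ := hstep t (by omega)
      rw [heq]
      intro i'
      by_cases h : i' = i
      · subst h; rw [Function.update_self]; exact hs
      · rw [Function.update_of_ne h]; exact ih (by omega) i'
  have hkey : ∀ t, t ≤ T → G.pot (S 0) + t * (ε / m) ≤ G.pot (S t) := by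
    intro t
    induction t with
    | zero => intro _; simp
    | succ t ih =>
      intro ht
      obtain ⟨i, s, hs, heq, himp⟩ := hstep t (by omega)
      have hdiff : G.pot (S (t + 1)) - G.pot (S t) =
          G.util (S (t + 1)) i - G.util (S t) i := by
        rw [heq]; exact pot_diff G hw hv (S t) i s
      have hU := hutil_lb (S t) (hvalid t (by omega)) i
      have hεU : ε / m ≤ ε * G.util (S t) i := by
        rw [div_eq_mul_one_div]
        exact mul_le_mul_of_nonneg_left hU hε0.le
      have := ih (by omega)
      push_cast
      nlinarith [himp]
  have hpos0 : 1 ≤ G.pot (S 0) := by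
    obtain ⟨i0⟩ := ‹Nonempty A›
    obtain ⟨j0, hj0⟩ := hne i0 _ (h0 i0)
    have h1 : 1 ≤ harm (G.load (S 0) j0) := by
      rw [← harm_one]; exact harm_mono (hload_lb (S 0) i0 j0 hj0)
    unfold CAG.pot
    calc (1 : ℝ) ≤ (G.v j0 : ℝ) * harm (G.load (S 0) j0) := by
          rw [hv]; push_cast; linarith
      _ ≤ ∑ j : N, (G.v j : ℝ) * harm (G.load (S 0) j) := by
          refine Finset.single_le_sum
            (f := fun j => (G.v j : ℝ) * harm (G.load (S 0) j)) (fun j _ => ?_) (Finset.mem_univ j0)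
          have := harm_nonneg (G.load (S 0) j)
          positivity
  have h1 : (T : ℝ) * (ε / m) < n * harm m := by
    have hk := hkey T le_rfl
    have hp := hpot_le (S T)
    linarith
  have h2 : (T : ℝ) * ε < n * harm m * m := by
    have h3 : (T : ℝ) * ε / m < n * harm m := by
      rw [mul_div_assoc]; exact h1
    calc (T : ℝ) * ε = (T : ℝ) * ε / m * m := by field_simp
      _ < n * harm m * m := mul_lt_mul_of_pos_right h3 hmpos
  have h4 : (T : ℝ) < (n * harm m * m) / ε := (lt_div_iff₀ hε0).mpr h2
  have heq2 : ε⁻¹ * (n : ℝ) * (m : ℝ) * harm m = ((n : ℝ) * harm m * m) / ε := by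
    field_simp
  rw [heq2]
  exact h4
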